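/- (i) Every simple root is small: Δ ⊆ Σ. (ii) For every positive root β ∈ Φ⁺ \ Δ there exists a simple root α ∈ Δ with B(α, β) > 0, equivalently ℓ(s_α s_β s_α) = ℓ(s_β) − 2; and for every such α, β is small if and only if s_α(β) is small and B(α, β) < 1. -/

import Mathlib

section RootSystemDefs

variable {S : Type*} {W : Type*} [Group W]

/-- The simple root `α_s` in the vector space `V = S → ℝ`. -/
def simpleRoot [DecidableEq S] (s : S) : S → ℝ := Pi.single s 1

/-- The symmetric bilinear form `B` on `V = S → ℝ` with `B(α_s, α_t) = -cos (π / m s t)`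
(with the convention that `B(α_s, α_t) = -1` when `m s t = ∞`, which is encoded by
`Mmat s t = 0`). -/
noncomputable def bform [Fintype S] (Mmat : CoxeterMatrix S) (v u : S → ℝ) : ℝ :=
  ∑ s : S, ∑ t : S,
    v s * u t * (if Mmat s t = 0 then -1 else -Real.cos (Real.pi / (Mmat s t : ℝ)))

/-- The conic closure of `X`: all nonnegative linear combinations of elements of `X`. -/
def coneOf {V : Type*} [AddCommMonoid V] [Module ℝ V] (X : Set V) : Set V :=
  {v | ∃ (n : ℕ) (c : Fin n → ℝ) (x : Fin n → V),
    (∀ i, 0 ≤ c i) ∧ (∀ i, x i ∈ X) ∧ v = ∑ i, c i • x i}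

variable [Fintype S] [DecidableEq S] {Mmat : CoxeterMatrix S}

/-- The root system `Φ = W(Δ)`, for the representation `ρ` of `W` on `V = S → ℝ`. -/
def rootSet (ρ : W →* ((S → ℝ) ≃ₗ[ℝ] (S → ℝ))) : Set (S → ℝ) :=
  {v | ∃ (w : W) (s : S), v = ρ w (simpleRoot s)}

/-- The positive roots `Φ⁺ = cone(Δ) ∩ Φ`. -/
def posRoots (ρ : W →* ((S → ℝ) ≃ₗ[ℝ] (S → ℝ))) : Set (S → ℝ) :=
  coneOf (Set.range (simpleRoot (S := S))) ∩ rootSet ρ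

/-- The negative roots `Φ⁻ = -Φ⁺`. -/
def negRoots (ρ : W →* ((S → ℝ) ≃ₗ[ℝ] (S → ℝ))) : Set (S → ℝ) :=
  {v | -v ∈ posRoots ρ}

/-- Dominance order: `Dominates ρ a b` means `a ≼ b`, i.e. every `w ∈ W` sending `b` to a
negative root also sends `a` to a negative root. -/
def Dominates (ρ : W →* ((S → ℝ) ≃ₗ[ℝ] (S → ℝ))) (a b : S → ℝ) : Prop :=
  ∀ w : W, ρ w b ∈ negRoots ρ → ρ w a ∈ negRoots ρ

/-- A small root: a positive root dominating no positive root other than itself. -/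
def IsSmallRoot (ρ : W →* ((S → ℝ) ≃ₗ[ℝ] (S → ℝ))) (b : S → ℝ) : Prop :=
  b ∈ posRoots ρ ∧ ∀ a ∈ posRoots ρ, Dominates ρ a b → a = b

/-- `t : W` is the reflection `s_b` in the root `b`: it acts on `V` by
`v ↦ v - 2 B(b, v) b`. -/
def IsReflIn (Mmat : CoxeterMatrix S) (ρ : W →* ((S → ℝ) ≃ₗ[ℝ] (S → ℝ)))
    (t : W) (b : S → ℝ) : Prop :=
  ∀ v : S → ℝ, ρ t v = v - (2 * bform Mmat b v) • b

/-- The (left) inversion set `N(w) = Φ⁺ ∩ w(Φ⁻)`. -/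
def invSet (ρ : W →* ((S → ℝ) ≃ₗ[ℝ] (S → ℝ))) (w : W) : Set (S → ℝ) :=
  {b | b ∈ posRoots ρ ∧ ρ w⁻¹ b ∈ negRoots ρ}

/-- `N¹(w) = {α ∈ Φ⁺ : ℓ(s_α w) = ℓ(w) - 1}`. -/
def nOne (cs : CoxeterSystem Mmat W) (ρ : W →* ((S → ℝ) ≃ₗ[ℝ] (S → ℝ)))
    (w : W) : Set (S → ℝ) :=
  {b | b ∈ posRoots ρ ∧
    ∃ t : W, IsReflIn Mmat ρ t b ∧ cs.length (t * w) + 1 = cs.length w}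

/-- A low element of `W`: an element `w` with `N¹(w) ⊆ Σ`. -/
def IsLow (cs : CoxeterSystem Mmat W) (ρ : W →* ((S → ℝ) ≃ₗ[ℝ] (S → ℝ)))
    (w : W) : Prop :=
  ∀ b ∈ nOne cs ρ w, IsSmallRoot ρ b

end RootSystemDefs

namespace SRAux
set_option linter.unusedSectionVars false

open Real

variable {S : Type*} [Fintype S] [DecidableEq S]

/-- The Coxeter form coefficient. -/
noncomputable def kap (Mmat : CoxeterMatrix S) (s t : S) : ℝ :=
  if Mmat s t = 0 then -1 else -Real.cos (Real.pi / (Mmat s t : ℝ))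

variable {Mmat : CoxeterMatrix S}

theorem kap_symm (s t : S) : kap Mmat s t = kap Mmat t s := by
  unfold kap; rw [Mmat.symmetric s t]

theorem kap_self (s : S) : kap Mmat s s = 1 := by
  unfold kap
  rw [if_neg (by simp [Mmat.diagonal s])]
  simp [Mmat.diagonal s]

theorem kap_nonpos {s t : S} (h : s ≠ t) : kap Mmat s t ≤ 0 := by
  unfold kap
  split_ifs with h0
  · norm_num
  · have h1 : Mmat s t ≠ 1 := Mmat.off_diagonal s t h
    have h2 : (2 : ℕ) ≤ Mmat s t := by omega
    have hpos : (0:ℝ) < (Mmat s t : ℝ) := by positivity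
    have : 0 ≤ Real.cos (Real.pi / (Mmat s t : ℝ)) := by
      apply Real.cos_nonneg_of_mem_Icc
      constructor
      · have : 0 ≤ Real.pi / (Mmat s t : ℝ) := by positivity
        linarith [Real.pi_pos]
      · rw [div_le_iff₀ hpos]
        have : (2:ℝ) ≤ (Mmat s t : ℝ) := by exact_mod_cast h2
        nlinarith [Real.pi_pos]
    linarith

theorem kap_ge_neg_one (s t : S) : -1 ≤ kap Mmat s t := by
  unfold kap
  split_ifs with h0
  · exact le_refl _
  · have := Real.cos_le_one (Real.pi / (Mmat s t : ℝ))
    linarith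

theorem bform_eq (v u : S → ℝ) :
    bform Mmat v u = ∑ s : S, ∑ t : S, v s * u t * kap Mmat s t := rfl

theorem bform_simpleRoot_left (s : S) (u : S → ℝ) :
    bform Mmat (simpleRoot s) u = ∑ t : S, u t * kap Mmat s t := by
  rw [bform_eq]
  rw [Finset.sum_eq_single s]
  · apply Finset.sum_congr rfl
    intro t _
    simp [simpleRoot]
  · intro b _ hb
    apply Finset.sum_eq_zero
    intro t _
    simp [simpleRoot, Pi.single_apply, hb]
  · intro h; exact absurd (Finset.mem_univ s) h

theorem bform_simpleRoot_simpleRoot (s t : S) :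
    bform Mmat (simpleRoot s) (simpleRoot t) = kap Mmat s t := by
  rw [bform_simpleRoot_left]
  rw [Finset.sum_eq_single t]
  · simp [simpleRoot]
  · intro b _ hb; simp [simpleRoot, Pi.single_apply, hb]
  · intro h; exact absurd (Finset.mem_univ t) h

theorem bform_symm (v u : S → ℝ) : bform Mmat v u = bform Mmat u v := by
  rw [bform_eq, bform_eq, Finset.sum_comm]
  apply Finset.sum_congr rfl; intro s _
  apply Finset.sum_congr rfl; intro t _
  rw [kap_symm]; ring

theorem bform_add_left (v v' u : S → ℝ) :
    bform Mmat (v + v') u = bform Mmat v u + bform Mmat v' u := by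
  simp [bform_eq, add_mul, Finset.sum_add_distrib]

theorem bform_smul_left (c : ℝ) (v u : S → ℝ) :
    bform Mmat (c • v) u = c * bform Mmat v u := by
  simp [bform_eq, Finset.mul_sum]
  apply Finset.sum_congr rfl; intro s _
  apply Finset.sum_congr rfl; intro t _
  ring

theorem bform_neg_left (v u : S → ℝ) : bform Mmat (-v) u = -bform Mmat v u := by
  have := bform_smul_left (Mmat := Mmat) (-1) v u
  simpa using this

theorem bform_sub_left (v v' u : S → ℝ) :
    bform Mmat (v - v') u = bform Mmat v u - bform Mmat v' u := by
  have := bform_add_left (Mmat := Mmat) v (-v') u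
  rw [bform_neg_left] at this
  simpa [sub_eq_add_neg] using this

theorem bform_add_right (v u u' : S → ℝ) :
    bform Mmat v (u + u') = bform Mmat v u + bform Mmat v u' := by
  rw [bform_symm, bform_add_left, bform_symm u v, bform_symm u' v]

theorem bform_smul_right (c : ℝ) (v u : S → ℝ) :
    bform Mmat v (c • u) = c * bform Mmat v u := by
  rw [bform_symm, bform_smul_left, bform_symm]

theorem bform_sub_right (v u u' : S → ℝ) :
    bform Mmat v (u - u') = bform Mmat v u - bform Mmat v u' := by
  rw [bform_symm, bform_sub_left, bform_symm u v, bform_symm u' v]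

/-- Decomposition of the form along coordinates. -/
theorem bform_eq_sum_coords (v u : S → ℝ) :
    bform Mmat v u = ∑ s : S, v s * bform Mmat (simpleRoot s) u := by
  rw [bform_eq]
  apply Finset.sum_congr rfl; intro s _
  rw [bform_simpleRoot_left, Finset.mul_sum]
  apply Finset.sum_congr rfl; intro t _
  ring

end SRAux

namespace SRAux
set_option linter.unusedSectionVars false

variable {S : Type*} [Fintype S] [DecidableEq S] {Mmat : CoxeterMatrix S}
  {W : Type*} [Group W] (cs : CoxeterSystem Mmat W)
  (ρ : W →* ((S → ℝ) ≃ₗ[ℝ] (S → ℝ)))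

/-- Abbreviation for the standard hypothesis. -/
def GoodRep : Prop :=
  ∀ (s : S) (v : S → ℝ),
    ρ (cs.simple s) v = v - (2 * bform Mmat (simpleRoot s) v) • simpleRoot s

theorem smul_simpleRoot_eq_single (c : ℝ) (s : S) :
    c • simpleRoot (S := S) s = Pi.single s c := by
  funext u
  unfold simpleRoot
  rcases eq_or_ne u s with h | h
  · subst h; simp
  · simp [Pi.single_apply, h]

theorem sum_smul_simpleRoot (v : S → ℝ) :
    ∑ s : S, v s • simpleRoot (S := S) s = v := by
  rw [Finset.sum_congr rfl (fun s _ => smul_simpleRoot_eq_single (v s) s)]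
  exact Finset.univ_sum_single v

theorem mem_cone_iff (v : S → ℝ) :
    v ∈ coneOf (Set.range (simpleRoot (S := S))) ↔ ∀ u, 0 ≤ v u := by
  constructor
  · rintro ⟨n, c, x, hc, hx, rfl⟩ u
    rw [Finset.sum_apply]
    apply Finset.sum_nonneg
    intro i _
    obtain ⟨si, hsi⟩ := hx i
    rw [Pi.smul_apply, ← hsi]
    have h1 : (0:ℝ) ≤ simpleRoot si u := by
      unfold simpleRoot
      rcases eq_or_ne u si with h | h
      · subst h; simp
      · simp [Pi.single_apply, h]
    have := mul_nonneg (hc i) h1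
    simpa using this
  · intro h
    classical
    obtain ⟨e⟩ := Fintype.truncEquivFin S
    refine ⟨Fintype.card S, fun i => v (e.symm i), fun i => simpleRoot (e.symm i),
      fun i => h _, fun i => ⟨_, rfl⟩, ?_⟩
    rw [Fintype.sum_equiv e.symm (fun i => v (e.symm i) • simpleRoot (S := S) (e.symm i))
      (fun s => v s • simpleRoot (S := S) s) (fun i => rfl)]
    exact (sum_smul_simpleRoot v).symm

theorem simpleRoot_ne_zero (s : S) : simpleRoot (S := S) s ≠ 0 := by
  intro h
  have := congrFun h s
  simp [simpleRoot] at this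

theorem bform_invariant (hρ : GoodRep cs ρ) (w : W) :
    ∀ u v, bform Mmat (ρ w u) (ρ w v) = bform Mmat u v := by
  induction w using cs.simple_induction with
  | simple i =>
    intro u v
    rw [hρ, hρ]
    simp only [bform_sub_left, bform_sub_right, bform_smul_left, bform_smul_right,
      bform_simpleRoot_simpleRoot, kap_self]
    rw [bform_symm u (simpleRoot i)]
    ring
  | one => simp
  | mul w w' h h' =>
    intro u v
    rw [map_mul]
    have e1 : ∀ x, (ρ w * ρ w') x = ρ w (ρ w' x) := fun x => rfl
    rw [e1, e1, h, h']

end SRAux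

namespace SRAux
set_option linter.unusedSectionVars false

variable {S : Type*} [Fintype S] [DecidableEq S] {Mmat : CoxeterMatrix S}
  {W : Type*} [Group W] (cs : CoxeterSystem Mmat W)
  (ρ : W →* ((S → ℝ) ≃ₗ[ℝ] (S → ℝ)))

theorem rho_mul_apply (w w' : W) (v : S → ℝ) : ρ (w * w') v = ρ w (ρ w' v) := by
  rw [map_mul]; rfl

theorem simpleRoot_mem_rootSet (s : S) : simpleRoot s ∈ rootSet ρ :=
  ⟨1, s, by simp⟩

theorem rho_mem_rootSet {z : S → ℝ} (hz : z ∈ rootSet ρ) (w : W) : ρ w z ∈ rootSet ρ := by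
  obtain ⟨w', s, rfl⟩ := hz
  exact ⟨w * w', s, (rho_mul_apply ρ w w' _).symm⟩

theorem bform_self_of_mem_rootSet (hρ : GoodRep cs ρ) {z : S → ℝ} (hz : z ∈ rootSet ρ) :
    bform Mmat z z = 1 := by
  obtain ⟨w, s, rfl⟩ := hz
  rw [bform_invariant cs ρ hρ, bform_simpleRoot_simpleRoot, kap_self]

theorem ne_zero_of_mem_rootSet (hρ : GoodRep cs ρ) {z : S → ℝ} (hz : z ∈ rootSet ρ) :
    z ≠ 0 := by
  intro h
  have := bform_self_of_mem_rootSet cs ρ hρ hz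
  rw [h] at this
  simp [bform_eq] at this

theorem rho_simple_simpleRoot_self (hρ : GoodRep cs ρ) (s : S) :
    ρ (cs.simple s) (simpleRoot s) = -(simpleRoot (S := S) s) := by
  rw [hρ, bform_simpleRoot_simpleRoot, kap_self]
  module

theorem neg_mem_rootSet (hρ : GoodRep cs ρ) {z : S → ℝ} (hz : z ∈ rootSet ρ) :
    -z ∈ rootSet ρ := by
  obtain ⟨w, s, rfl⟩ := hz
  refine ⟨w * cs.simple s, s, ?_⟩
  rw [rho_mul_apply, rho_simple_simpleRoot_self cs ρ hρ, map_neg]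

theorem mem_posRoots_iff (hρ : GoodRep cs ρ) (b : S → ℝ) :
    b ∈ posRoots ρ ↔ b ∈ rootSet ρ ∧ ∀ u, 0 ≤ b u := by
  unfold posRoots
  rw [Set.mem_inter_iff, mem_cone_iff]
  tauto

theorem mem_negRoots_iff (hρ : GoodRep cs ρ) (b : S → ℝ) :
    b ∈ negRoots ρ ↔ b ∈ rootSet ρ ∧ ∀ u, b u ≤ 0 := by
  unfold negRoots
  rw [Set.mem_setOf_eq, mem_posRoots_iff cs ρ hρ]
  constructor
  · rintro ⟨h1, h2⟩
    refine ⟨by simpa using neg_mem_rootSet cs ρ hρ h1, fun u => ?_⟩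
    have := h2 u
    simp only [Pi.neg_apply] at this
    linarith
  · rintro ⟨h1, h2⟩
    refine ⟨neg_mem_rootSet cs ρ hρ h1, fun u => ?_⟩
    have := h2 u
    simp only [Pi.neg_apply]
    linarith

theorem not_mem_pos_and_neg (hρ : GoodRep cs ρ) (b : S → ℝ)
    (h1 : b ∈ posRoots ρ) (h2 : b ∈ negRoots ρ) : False := by
  rw [mem_posRoots_iff cs ρ hρ] at h1
  rw [mem_negRoots_iff cs ρ hρ] at h2
  apply ne_zero_of_mem_rootSet cs ρ hρ h1.1
  funext u
  exact le_antisymm (h2.2 u) (h1.2 u)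

/-- The coordinate-sum functional. -/
def fsum (v : S → ℝ) : ℝ := ∑ u : S, v u

theorem fsum_pos_of_posRoot (hρ : GoodRep cs ρ) {b : S → ℝ} (hb : b ∈ posRoots ρ) :
    0 < fsum b := by
  rw [mem_posRoots_iff cs ρ hρ] at hb
  have hne := ne_zero_of_mem_rootSet cs ρ hρ hb.1
  have : ∃ u, b u ≠ 0 := by
    by_contra h
    push_neg at h
    exact hne (funext fun u => h u)
  obtain ⟨u, hu⟩ := this
  apply Finset.sum_pos' (fun i _ => hb.2 i) ⟨u, Finset.mem_univ u, lt_of_le_of_ne (hb.2 u) (Ne.symm hu)⟩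

theorem fsum_neg_of_negRoot (hρ : GoodRep cs ρ) {b : S → ℝ} (hb : b ∈ negRoots ρ) :
    fsum b < 0 := by
  have : (0:ℝ) < fsum (-b) := fsum_pos_of_posRoot cs ρ hρ hb
  unfold fsum at this ⊢
  simp only [Pi.neg_apply] at this
  have e : ∑ u : S, -b u = -∑ u : S, b u := by rw [Finset.sum_neg_distrib]
  rw [e] at this
  linarith

theorem exists_pos_coord_of_posRoot (hρ : GoodRep cs ρ) {b : S → ℝ} (hb : b ∈ posRoots ρ) :
    ∃ u, 0 < b u := by
  by_contra h
  push_neg at h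
  have h2 := (mem_posRoots_iff cs ρ hρ b).1 hb
  apply ne_zero_of_mem_rootSet cs ρ hρ h2.1
  funext u
  exact le_antisymm (h u) (h2.2 u)

end SRAux

namespace SRAux
set_option linter.unusedSectionVars false
set_option maxHeartbeats 1000000

open Real CoxeterSystem

variable {S : Type*} [Fintype S] [DecidableEq S] {Mmat : CoxeterMatrix S}
  {W : Type*} [Group W] (cs : CoxeterSystem Mmat W)
  (ρ : W →* ((S → ℝ) ≃ₗ[ℝ] (S → ℝ)))

/-- The Chebyshev-like sequence. -/
noncomputable def Sseq (c : ℝ) : ℕ → ℝ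
  | 0 => 0
  | 1 => 1
  | (n+2) => 2*c*Sseq c (n+1) - Sseq c n

@[simp] theorem Sseq_zero (c : ℝ) : Sseq c 0 = 0 := rfl
@[simp] theorem Sseq_one' (c : ℝ) : Sseq c 1 = 1 := rfl
theorem Sseq_two (c : ℝ) (n : ℕ) : Sseq c (n+2) = 2*c*Sseq c (n+1) - Sseq c n := rfl

theorem Sseq_of_one (n : ℕ) : Sseq 1 n = n := by
  induction n using Nat.twoStepInduction with
  | zero => simp
  | one => simp
  | more n h1 h2 =>
    rw [Sseq_two, h1, h2]
    push_cast
    ring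

theorem Sseq_sin {m : ℕ} (hm : m ≠ 0) (n : ℕ) :
    Sseq (Real.cos (Real.pi / m)) n * Real.sin (Real.pi / m) = Real.sin (n * (Real.pi / m)) := by
  induction n using Nat.twoStepInduction with
  | zero => simp
  | one => simp
  | more n h1 h2 =>
    rw [Sseq_two]
    have e1 : ((n + 2 : ℕ) : ℝ) * (Real.pi / m) = ((n+1 : ℕ) : ℝ) * (Real.pi / m) + Real.pi / m := by
      push_cast; ring
    have e2 : Real.sin ((n:ℝ) * (Real.pi / m)) = Real.sin (((n+1 : ℕ) : ℝ) * (Real.pi / m)) * Real.cos (Real.pi / m) - Real.cos (((n+1 : ℕ) : ℝ) * (Real.pi / m)) * Real.sin (Real.pi / m) := by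
      rw [← Real.sin_sub]
      congr 1
      push_cast; ring
    rw [e1, Real.sin_add]
    linear_combination (2*Real.cos (Real.pi/(m:ℝ)))*h2 - h1 - e2

/-- Sign of Sseq coefficients in the relevant range. -/
theorem Sseq_nonneg {s t : S} (hst : s ≠ t) (n : ℕ)
    (hbound : Mmat s t = 0 ∨ n ≤ Mmat s t) :
    0 ≤ Sseq (-kap Mmat s t) n := by
  rcases eq_or_ne (Mmat s t) 0 with h0 | h0
  · have : kap Mmat s t = -1 := by unfold kap; rw [if_pos h0]
    rw [this]
    norm_num [Sseq_of_one]
  · have hm : 2 ≤ Mmat s t := by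
      have := Mmat.off_diagonal s t hst
      omega
    have hc : -kap Mmat s t = Real.cos (Real.pi / (Mmat s t : ℝ)) := by
      unfold kap; rw [if_neg h0]; ring
    rw [hc]
    have hn : n ≤ Mmat s t := by tauto
    have hmr : (0:ℝ) < (Mmat s t : ℝ) := by positivity
    have hsinpos : 0 < Real.sin (Real.pi / (Mmat s t : ℝ)) := by
      apply Real.sin_pos_of_pos_of_lt_pi
      · positivity
      · rw [div_lt_iff₀ hmr]
        have : (2:ℝ) ≤ (Mmat s t : ℝ) := by exact_mod_cast hm
        nlinarith [Real.pi_pos]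
    have hsin2 : 0 ≤ Real.sin ((n : ℝ) * (Real.pi / (Mmat s t : ℝ))) := by
      apply Real.sin_nonneg_of_nonneg_of_le_pi
      · positivity
      · rw [mul_div_assoc']  -- n * π / m ≤ π
        rw [div_le_iff₀ hmr]
        have : (n:ℝ) ≤ (Mmat s t : ℝ) := by exact_mod_cast hn
        nlinarith [Real.pi_pos]
    have := Sseq_sin (m := Mmat s t) h0 n
    nlinarith

end SRAux

namespace SRAux
set_option linter.unusedSectionVars false
set_option maxHeartbeats 1000000

open Real CoxeterSystem

variable {S : Type*} [Fintype S] [DecidableEq S] {Mmat : CoxeterMatrix S}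
  {W : Type*} [Group W] (cs : CoxeterSystem Mmat W)
  (ρ : W →* ((S → ℝ) ≃ₗ[ℝ] (S → ℝ)))

theorem bform_simple_combo (A B : ℝ) (x s t : S) :
    bform Mmat (simpleRoot x) (A • simpleRoot s + B • simpleRoot t)
      = A * kap Mmat x s + B * kap Mmat x t := by
  rw [bform_add_right, bform_smul_right, bform_smul_right,
    bform_simpleRoot_simpleRoot, bform_simpleRoot_simpleRoot]

theorem rho_alt (hρ : GoodRep cs ρ) (s t : S) (n : ℕ) :
    ρ (cs.wordProd (alternatingWord s t n)) (simpleRoot s)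
      = (if Even n then Sseq (-kap Mmat s t) (n+1) else Sseq (-kap Mmat s t) n) • simpleRoot s
        + (if Even n then Sseq (-kap Mmat s t) n else Sseq (-kap Mmat s t) (n+1)) • simpleRoot t := by
  set c := -kap Mmat s t with hc
  have hk : kap Mmat s t = -c := by rw [hc]; ring
  induction n with
  | zero =>
    rw [show alternatingWord s t 0 = [] from rfl, wordProd_nil, map_one]
    simp
  | succ n ih =>
    rw [alternatingWord_succ', wordProd_cons, rho_mul_apply, ih]
    have e2 : Sseq c (n+1+1) = 2*c*Sseq c (n+1) - Sseq c n := Sseq_two c n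
    rcases Nat.even_or_odd n with he | ho
    · have hEn1 : ¬ Even (n+1) := by simp [Nat.even_add_one, he]
      simp only [if_pos he, if_neg hEn1]
      rw [hρ t _, bform_simple_combo, kap_symm t s, kap_self, hk, e2]
      module
    · have hne : ¬ Even n := Nat.not_even_iff_odd.mpr ho
      have hE1 : Even (n+1) := Nat.even_add_one.mpr hne
      simp only [if_neg hne, if_pos hE1]
      rw [hρ s _, bform_simple_combo, kap_self, hk, e2]
      module

theorem length_wordProd_mod_two (ω : List S) :
    cs.length (cs.wordProd ω) % 2 = ω.length % 2 := by
  induction ω with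
  | nil => simp
  | cons i ω ih =>
    rw [wordProd_cons]
    have := cs.length_mul_mod_two (cs.simple i) (cs.wordProd ω)
    rw [cs.length_simple] at this
    rw [this, List.length_cons]
    omega

theorem alt_prod_len_bound {s t : S} (hst : s ≠ t) {n : ℕ} (h0 : Mmat s t ≠ 0)
    (hn : Mmat s t ≤ n) :
    cs.length (cs.wordProd (alternatingWord t s (n+1))) + 2 ≤ n + 1 := by
  have h1 : cs.length (cs.wordProd (alternatingWord t s (n+1))) ≤ n + 1 := by
    have := cs.length_wordProd_le (alternatingWord t s (n+1))
    rwa [length_alternatingWord] at this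
  have h0' : Mmat t s ≠ 0 := by rwa [Mmat.symmetric t s]
  have h2 : ¬ cs.IsReduced (alternatingWord t s (n+1)) := by
    apply cs.not_isReduced_alternatingWord t s h0'
    have := Mmat.symmetric t s
    omega
  have h3 : cs.length (cs.wordProd (alternatingWord t s (n+1))) ≠ n + 1 := by
    intro h
    apply h2
    unfold CoxeterSystem.IsReduced
    rw [length_alternatingWord]
    exact h
  have h4 := length_wordProd_mod_two cs (alternatingWord t s (n+1))
  rw [length_alternatingWord] at h4
  omega

theorem chain (N : ℕ) : ∀ (w : W) (s t : S), s ≠ t →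
    cs.length w ≤ N →
    cs.length (w * cs.simple s) = cs.length w + 1 →
    cs.length (w * cs.simple t) + 1 = cs.length w →
    ∃ (u : W) (n : ℕ), 1 ≤ n ∧ w = u * cs.wordProd (alternatingWord s t n) ∧
      cs.length w = cs.length u + n ∧
      cs.length (u * cs.simple s) = cs.length u + 1 ∧
      cs.length (u * cs.simple t) = cs.length u + 1 := by
  induction N with
  | zero =>
    intro w s t hst hlen hs ht
    omega
  | succ N ih =>
    intro w s t hst hlen hs ht
    set w₁ := w * cs.simple t with hw₁
    have hw : w = w₁ * cs.simple t := by
      rw [hw₁, cs.simple_mul_simple_cancel_right]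
    have hl1 : cs.length w₁ + 1 = cs.length w := ht
    rcases cs.length_mul_simple w₁ s with hasc | hdesc
    · refine ⟨w₁, 1, le_refl 1, ?_, by omega, hasc, ?_⟩
      · rw [hw]
        congr 1
        show cs.simple t = cs.wordProd (alternatingWord s t 1)
        have : alternatingWord s t 1 = [t] := rfl
        rw [this, wordProd_singleton]
      · rw [← hw]
        omega
    · have hw1t : cs.length (w₁ * cs.simple t) = cs.length w₁ + 1 := by
        rw [← hw]; omega
      have hw1len : cs.length w₁ ≤ N := by omega
      obtain ⟨u, n, hn1, hweq, hlen', hut, hus⟩ :=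
        ih w₁ t s (Ne.symm hst) hw1len hw1t (by omega)
      refine ⟨u, n + 1, by omega, ?_, by omega, hus, hut⟩
      rw [hw, hweq, alternatingWord_succ, wordProd_concat, mul_assoc]

theorem posRoot_of_ascent (hρ : GoodRep cs ρ) (w : W) (s : S)
    (h : cs.length (w * cs.simple s) = cs.length w + 1) :
    ρ w (simpleRoot s) ∈ posRoots ρ := by
  suffices H : ∀ (N : ℕ) (w : W) (s : S), cs.length w = N →
      cs.length (w * cs.simple s) = cs.length w + 1 → ρ w (simpleRoot s) ∈ posRoots ρ by
    exact H (cs.length w) w s rfl h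
  clear h w s
  intro N
  induction N using Nat.strong_induction_on with
  | _ N ih =>
  intro w s hN hasc
  rcases Nat.eq_zero_or_pos N with h0 | hpos
  · have : w = 1 := by
      rw [← cs.length_eq_zero_iff]; omega
    subst this
    rw [map_one]
    rw [mem_posRoots_iff cs ρ hρ]
    refine ⟨by simpa using simpleRoot_mem_rootSet ρ s, fun u => ?_⟩
    show (0:ℝ) ≤ simpleRoot s u
    unfold simpleRoot
    rcases eq_or_ne u s with h | h
    · subst h; simp
    · simp [Pi.single_apply, h]
  · have hw1 : w ≠ 1 := by
      intro h; rw [h] at hN; simp at hN; omega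
    obtain ⟨t, ht⟩ := cs.exists_rightDescent_of_ne_one hw1
    have htd : cs.length (w * cs.simple t) + 1 = cs.length w := by
      rcases cs.length_mul_simple w t with h1 | h1
      · exfalso; unfold CoxeterSystem.IsRightDescent at ht; omega
      · omega
    have hst : s ≠ t := by
      intro h
      subst h
      omega
    obtain ⟨u, n, hn1, hweq, hlen', hus, hut⟩ :=
      chain cs N w s t hst (by omega) hasc htd
    -- bound on n
    have hbound : Mmat s t = 0 ∨ n < Mmat s t := by
      by_contra hcon
      push_neg at hcon
      obtain ⟨hm0, hmn⟩ := hcon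
      have e1 : w * cs.simple s = u * cs.wordProd (alternatingWord t s (n+1)) := by
        rw [hweq, alternatingWord_succ, wordProd_concat, mul_assoc]
      have e2 : cs.length (w * cs.simple s) ≤ cs.length u +
          cs.length (cs.wordProd (alternatingWord t s (n+1))) := by
        rw [e1]; exact cs.length_mul_le u _
      have e3 := alt_prod_len_bound cs hst hm0 hmn
      omega
    have hSnn : ∀ j, j ≤ n + 1 → 0 ≤ Sseq (-kap Mmat s t) j := by
      intro j hj
      apply Sseq_nonneg hst
      rcases hbound with h | h
      · exact Or.inl h
      · right; omega
    have hulen : cs.length u < N := by omega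
    have hu_s : ρ u (simpleRoot s) ∈ posRoots ρ := ih (cs.length u) (by omega) u s rfl hus
    have hu_t : ρ u (simpleRoot t) ∈ posRoots ρ := ih (cs.length u) (by omega) u t rfl hut
    -- compute
    have hcomp : ρ w (simpleRoot s) =
        (if Even n then Sseq (-kap Mmat s t) (n+1) else Sseq (-kap Mmat s t) n) • ρ u (simpleRoot s)
        + (if Even n then Sseq (-kap Mmat s t) n else Sseq (-kap Mmat s t) (n+1)) • ρ u (simpleRoot t) := by
      rw [hweq, rho_mul_apply, rho_alt cs ρ hρ, map_add, map_smul, map_smul]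
    rw [mem_posRoots_iff cs ρ hρ]
    constructor
    · exact rho_mem_rootSet ρ (simpleRoot_mem_rootSet ρ s) w
    · intro v
      rw [hcomp]
      have hA : 0 ≤ (if Even n then Sseq (-kap Mmat s t) (n+1) else Sseq (-kap Mmat s t) n) := by
        split_ifs
        · exact hSnn (n+1) (le_refl _)
        · exact hSnn n (by omega)
      have hB : 0 ≤ (if Even n then Sseq (-kap Mmat s t) n else Sseq (-kap Mmat s t) (n+1)) := by
        split_ifs
        · exact hSnn n (by omega)
        · exact hSnn (n+1) (le_refl _)
      have h1 := ((mem_posRoots_iff cs ρ hρ _).1 hu_s).2 v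
      have h2 := ((mem_posRoots_iff cs ρ hρ _).1 hu_t).2 v
      simp only [Pi.add_apply, Pi.smul_apply, smul_eq_mul]
      have := mul_nonneg hA h1
      have := mul_nonneg hB h2
      linarith

end SRAux

namespace SRAux
set_option linter.unusedSectionVars false
set_option maxHeartbeats 1000000

open Real CoxeterSystem

variable {S : Type*} [Fintype S] [DecidableEq S] {Mmat : CoxeterMatrix S}
  {W : Type*} [Group W] (cs : CoxeterSystem Mmat W)
  (ρ : W →* ((S → ℝ) ≃ₗ[ℝ] (S → ℝ)))

theorem negRoot_of_descent (hρ : GoodRep cs ρ) (w : W) (s : S)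
    (h : cs.length (w * cs.simple s) + 1 = cs.length w) :
    ρ w (simpleRoot s) ∈ negRoots ρ := by
  set w' := w * cs.simple s with hw'
  have hw : w = w' * cs.simple s := by rw [hw', cs.simple_mul_simple_cancel_right]
  have hasc : cs.length (w' * cs.simple s) = cs.length w' + 1 := by rw [← hw]; omega
  have hpos := posRoot_of_ascent cs ρ hρ w' s hasc
  have : ρ w (simpleRoot s) = -(ρ w' (simpleRoot s)) := by
    rw [hw, rho_mul_apply, rho_simple_simpleRoot_self cs ρ hρ, map_neg]
  rw [this]
  show -(-(ρ w' (simpleRoot s))) ∈ posRoots ρ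
  rwa [neg_neg]

theorem ascent_iff_posRoot (hρ : GoodRep cs ρ) (w : W) (s : S) :
    cs.length (w * cs.simple s) = cs.length w + 1 ↔ ρ w (simpleRoot s) ∈ posRoots ρ := by
  constructor
  · exact posRoot_of_ascent cs ρ hρ w s
  · intro h
    rcases cs.length_mul_simple w s with h1 | h1
    · exact h1
    · exfalso
      exact not_mem_pos_and_neg cs ρ hρ _ h (negRoot_of_descent cs ρ hρ w s h1)

theorem descent_iff_negRoot (hρ : GoodRep cs ρ) (w : W) (s : S) :
    cs.length (w * cs.simple s) + 1 = cs.length w ↔ ρ w (simpleRoot s) ∈ negRoots ρ := by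
  constructor
  · exact negRoot_of_descent cs ρ hρ w s
  · intro h
    rcases cs.length_mul_simple w s with h1 | h1
    · exfalso
      exact not_mem_pos_and_neg cs ρ hρ _ (posRoot_of_ascent cs ρ hρ w s h1) h
    · exact h1

/-- Dichotomy: every root is positive or negative. -/
theorem root_pos_or_neg (hρ : GoodRep cs ρ) {z : S → ℝ} (hz : z ∈ rootSet ρ) :
    z ∈ posRoots ρ ∨ z ∈ negRoots ρ := by
  obtain ⟨w, s, rfl⟩ := hz
  rcases cs.length_mul_simple w s with h1 | h1
  · exact Or.inl (posRoot_of_ascent cs ρ hρ w s h1)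
  · exact Or.inr (negRoot_of_descent cs ρ hρ w s h1)

theorem posRoot_of_not_neg (hρ : GoodRep cs ρ) {z : S → ℝ} (hz : z ∈ rootSet ρ)
    (h : z ∉ negRoots ρ) : z ∈ posRoots ρ := by
  rcases root_pos_or_neg cs ρ hρ hz with h1 | h1
  · exact h1
  · exact absurd h1 h

/-- A root with nonnegative coordinates is positive. -/
theorem posRoot_of_nonneg_coords (hρ : GoodRep cs ρ) {z : S → ℝ} (hz : z ∈ rootSet ρ)
    (h : ∀ u, 0 ≤ z u) : z ∈ posRoots ρ :=
  (mem_posRoots_iff cs ρ hρ z).2 ⟨hz, h⟩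

theorem negRoot_of_nonpos_coords (hρ : GoodRep cs ρ) {z : S → ℝ} (hz : z ∈ rootSet ρ)
    (h : ∀ u, z u ≤ 0) : z ∈ negRoots ρ :=
  (mem_negRoots_iff cs ρ hρ z).2 ⟨hz, h⟩

/-- A positive root whose off-`s` coordinates vanish is the simple root. -/
theorem eq_simpleRoot_of_coords (hρ : GoodRep cs ρ) {b : S → ℝ} (hb : b ∈ posRoots ρ)
    (s : S) (h : ∀ u, u ≠ s → b u = 0) : b = simpleRoot s := by
  rw [mem_posRoots_iff cs ρ hρ] at hb
  have hbs : b = b s • simpleRoot (S := S) s := by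
    funext u
    rcases eq_or_ne u s with hu | hu
    · subst hu; simp [simpleRoot]
    · rw [h u hu]
      simp [simpleRoot, Pi.single_apply, hu]
  have hnorm : bform Mmat b b = 1 := by
    apply bform_self_of_mem_rootSet cs ρ hρ hb.1
  rw [hbs] at hnorm
  rw [bform_smul_left, bform_smul_right, bform_simpleRoot_simpleRoot, kap_self] at hnorm
  have : b s = 1 := by
    have hge : 0 ≤ b s := hb.2 s
    nlinarith
  rw [hbs, this, one_smul]

/-- `b` positive, not the simple root `α_s`, has a positive coordinate away from `s`. -/
theorem exists_other_pos_coord (hρ : GoodRep cs ρ) {b : S → ℝ} (hb : b ∈ posRoots ρ)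
    (s : S) (hne : b ≠ simpleRoot s) : ∃ u, u ≠ s ∧ 0 < b u := by
  by_contra h
  push_neg at h
  apply hne
  apply eq_simpleRoot_of_coords cs ρ hρ hb s
  intro u hu
  exact le_antisymm (h u hu) (((mem_posRoots_iff cs ρ hρ b).1 hb).2 u)

/-- The simple reflection permutes the positive roots other than `α_s`. -/
theorem rho_simple_posRoot (hρ : GoodRep cs ρ) {b : S → ℝ} (hb : b ∈ posRoots ρ)
    (s : S) (hne : b ≠ simpleRoot s) : ρ (cs.simple s) b ∈ posRoots ρ := by
  obtain ⟨u, hu, hupos⟩ := exists_other_pos_coord cs ρ hρ hb s hne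
  have hroot : ρ (cs.simple s) b ∈ rootSet ρ :=
    rho_mem_rootSet ρ ((mem_posRoots_iff cs ρ hρ b).1 hb).1 _
  apply posRoot_of_not_neg cs ρ hρ hroot
  intro hneg
  have := ((mem_negRoots_iff cs ρ hρ _).1 hneg).2 u
  rw [hρ s b] at this
  have he : (b - (2 * bform Mmat (simpleRoot s) b) • simpleRoot s) u = b u := by
    simp [simpleRoot, Pi.single_apply, hu]
  rw [he] at this
  linarith

/-- Existence of the reflection in a root. -/
theorem exists_reflIn (hρ : GoodRep cs ρ) {z : S → ℝ} (hz : z ∈ rootSet ρ) :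
    ∃ r : W, IsReflIn Mmat ρ r z := by
  obtain ⟨w, s, rfl⟩ := hz
  refine ⟨w * cs.simple s * w⁻¹, fun v => ?_⟩
  rw [rho_mul_apply, rho_mul_apply, hρ s _, map_sub, map_smul]
  have e1 : ρ w (ρ w⁻¹ v) = v := by
    rw [← rho_mul_apply, mul_inv_cancel, map_one]; rfl
  rw [e1]
  congr 2
  rw [← bform_invariant cs ρ hρ w (simpleRoot s) (ρ w⁻¹ v), e1]

theorem reflIn_apply_self (hρ : GoodRep cs ρ) {z : S → ℝ} (hz : z ∈ rootSet ρ)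
    {r : W} (hr : IsReflIn Mmat ρ r z) : ρ r z = -z := by
  rw [hr z, bform_self_of_mem_rootSet cs ρ hρ hz]
  module

theorem reflIn_sq (hρ : GoodRep cs ρ) (hfaith : Function.Injective ρ)
    {z : S → ℝ} (hz : z ∈ rootSet ρ) {r : W} (hr : IsReflIn Mmat ρ r z) : r * r = 1 := by
  apply hfaith
  rw [map_mul, map_one]
  apply LinearEquiv.toLinearMap_injective
  apply LinearMap.ext
  intro v
  show ρ r (ρ r v) = v
  rw [hr v, map_sub, map_smul, hr v, reflIn_apply_self cs ρ hρ hz hr]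
  module

end SRAux

namespace SRAux
set_option linter.unusedSectionVars false
set_option maxHeartbeats 1000000

open Real CoxeterSystem

variable {S : Type*} [Fintype S] [DecidableEq S] {Mmat : CoxeterMatrix S}
  {W : Type*} [Group W] (cs : CoxeterSystem Mmat W)
  (ρ : W →* ((S → ℝ) ≃ₗ[ℝ] (S → ℝ)))

theorem fsum_add (v u : S → ℝ) : fsum (v + u) = fsum v + fsum u := by
  unfold fsum; simp [Finset.sum_add_distrib]

theorem fsum_smul (c : ℝ) (v : S → ℝ) : fsum (c • v) = c * fsum v := by
  unfold fsum; simp [Finset.mul_sum]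

theorem finite_invSetM (hρ : GoodRep cs ρ) (w : W) :
    {z | z ∈ posRoots ρ ∧ ρ w z ∈ negRoots ρ}.Finite := by
  suffices H : ∀ (N : ℕ) (w : W), cs.length w = N →
      {z | z ∈ posRoots ρ ∧ ρ w z ∈ negRoots ρ}.Finite by
    exact H (cs.length w) w rfl
  clear w
  intro N
  induction N using Nat.strong_induction_on with
  | _ N ih =>
  intro w hN
  rcases Nat.eq_zero_or_pos N with h0 | hpos
  · have hw : w = 1 := by rw [← cs.length_eq_zero_iff]; omega
    subst hw
    convert Set.finite_empty
    rw [Set.eq_empty_iff_forall_notMem]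
    rintro z ⟨h1, h2⟩
    rw [map_one] at h2
    exact not_mem_pos_and_neg cs ρ hρ z h1 h2
  · have hw1 : w ≠ 1 := by intro h; rw [h] at hN; simp at hN; omega
    obtain ⟨t, ht⟩ := cs.exists_rightDescent_of_ne_one hw1
    have ht' : cs.length (w * cs.simple t) < cs.length w := ht
    set u := w * cs.simple t with hu
    have hlu : cs.length u < N := by omega
    have hfin_u := ih (cs.length u) hlu u rfl
    apply Set.Finite.subset (Set.Finite.insert (simpleRoot t)
      (hfin_u.image (fun z => ρ (cs.simple t) z)))
    rintro z ⟨hz1, hz2⟩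
    rcases eq_or_ne z (simpleRoot t) with rfl | hne
    · exact Set.mem_insert _ _
    · right
      refine ⟨ρ (cs.simple t) z, ⟨rho_simple_posRoot cs ρ hρ hz1 t hne, ?_⟩, ?_⟩
      · have : ρ u (ρ (cs.simple t) z) = ρ w z := by
          rw [← rho_mul_apply, hu, mul_assoc, cs.simple_mul_simple_self, mul_one]
        rwa [this]
      · show ρ (cs.simple t) (ρ (cs.simple t) z) = z
        rw [← rho_mul_apply, cs.simple_mul_simple_self, map_one]
        rfl

theorem lemK (hρ : GoodRep cs ρ) {x y : S → ℝ} (hx : x ∈ posRoots ρ) (hy : y ∈ posRoots ρ)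
    (hB : bform Mmat x y ≤ -1) (w : W)
    (hwx : ρ w x ∈ negRoots ρ) (hwy : ρ w y ∈ negRoots ρ) : False := by
  have hxr : x ∈ rootSet ρ := ((mem_posRoots_iff cs ρ hρ x).1 hx).1
  have hyr : y ∈ rootSet ρ := ((mem_posRoots_iff cs ρ hρ y).1 hy).1
  obtain ⟨rx, hrx⟩ := exists_reflIn cs ρ hρ hxr
  obtain ⟨ry, hry⟩ := exists_reflIn cs ρ hρ hyr
  set d : ℝ := -bform Mmat x y with hd
  have hd1 : 1 ≤ d := by rw [hd]; linarith
  let γ : ℕ → W := fun n => Nat.rec (motive := fun _ => W) 1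
    (fun k g => (if Even k then ry else rx) * g) n
  have hγs : ∀ k, γ (k+1) = (if Even k then ry else rx) * γ k := fun k => rfl
  have key : ∀ n : ℕ, ∃ a b : ℝ, ρ (γ n) x = a • x + b • y ∧ 0 ≤ a ∧ 0 ≤ b ∧
      (if Even n then b + 1 ≤ a else a + 1 ≤ b) ∧ (n : ℝ) ≤ a + b := by
    intro n
    induction n with
    | zero =>
      refine ⟨1, 0, ?_, by norm_num, by norm_num, by norm_num, by norm_num⟩
      show ρ 1 x = (1:ℝ) • x + (0:ℝ) • y
      rw [map_one]
      show x = (1:ℝ) • x + (0:ℝ) • y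
      module
    | succ n ihn =>
      obtain ⟨a, b, he, ha, hb, hab, hsum⟩ := ihn
      have hxy : bform Mmat x y = -d := by rw [hd]; ring
      rcases Nat.even_or_odd n with hev | hod
      · have hEn1 : ¬ Even (n+1) := by simp [Nat.even_add_one, hev]
        simp only [hev, if_true] at hab
        refine ⟨a, 2*d*a - b, ?_, ha, by nlinarith, ?_, by push_cast; nlinarith⟩
        · rw [hγs n, if_pos hev, rho_mul_apply, he, map_add, map_smul, map_smul,
            reflIn_apply_self cs ρ hρ hyr hry, hry x, bform_symm y x, hxy]
          module
        · simp only [hEn1, if_false]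
          nlinarith
      · have hne : ¬ Even n := Nat.not_even_iff_odd.mpr hod
        have hE1 : Even (n+1) := Nat.even_add_one.mpr hne
        simp only [hne, if_false] at hab
        refine ⟨2*d*b - a, b, ?_, by nlinarith, hb, ?_, by push_cast; nlinarith⟩
        · rw [hγs n, if_neg hne, rho_mul_apply, he, map_add, map_smul, map_smul,
            reflIn_apply_self cs ρ hρ hxr hrx, hrx y, hxy]
          module
        · simp only [hE1, if_true]
          nlinarith
  -- Each ρ (γ n) x lies in the inversion set of w.
  have hmem : ∀ n : ℕ, ρ (γ n) x ∈ {z | z ∈ posRoots ρ ∧ ρ w z ∈ negRoots ρ} := by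
    intro n
    obtain ⟨a, b, he, ha, hb, _, _⟩ := key n
    constructor
    · rw [mem_posRoots_iff cs ρ hρ]
      refine ⟨rho_mem_rootSet ρ hxr _, fun v => ?_⟩
      rw [he]
      have h1 := ((mem_posRoots_iff cs ρ hρ x).1 hx).2 v
      have h2 := ((mem_posRoots_iff cs ρ hρ y).1 hy).2 v
      simp only [Pi.add_apply, Pi.smul_apply, smul_eq_mul]
      nlinarith
    · rw [mem_negRoots_iff cs ρ hρ]
      refine ⟨rho_mem_rootSet ρ (rho_mem_rootSet ρ hxr _) w, fun v => ?_⟩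
      rw [he, map_add, map_smul, map_smul]
      have h1 := ((mem_negRoots_iff cs ρ hρ _).1 hwx).2 v
      have h2 := ((mem_negRoots_iff cs ρ hρ _).1 hwy).2 v
      simp only [Pi.add_apply, Pi.smul_apply, smul_eq_mul]
      nlinarith
  -- fsum grows without bound, contradicting finiteness.
  have hfin := finite_invSetM cs ρ hρ w
  obtain ⟨C, hC⟩ := (hfin.image fsum).bddAbove
  have hFx := fsum_pos_of_posRoot cs ρ hρ hx
  have hFy := fsum_pos_of_posRoot cs ρ hρ hy
  set F : ℝ := min (fsum x) (fsum y) with hF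
  have hFpos : 0 < F := lt_min hFx hFy
  obtain ⟨n, hn⟩ := exists_nat_gt (C / F)
  have hgrow : (n : ℝ) * F ≤ fsum (ρ (γ n) x) := by
    obtain ⟨a, b, he, ha, hb, _, hsum⟩ := key n
    rw [he, fsum_add, fsum_smul, fsum_smul]
    have e1 : F ≤ fsum x := min_le_left _ _
    have e2 : F ≤ fsum y := min_le_right _ _
    nlinarith
  have hle : fsum (ρ (γ n) x) ≤ C := hC (Set.mem_image_of_mem fsum (hmem n))
  have : C < (n:ℝ) * F := by
    rw [div_lt_iff₀ hFpos] at hn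
    linarith
  linarith

end SRAux

namespace SRAux
set_option linter.unusedSectionVars false
set_option maxHeartbeats 2000000

open Real CoxeterSystem

variable {S : Type*} [Fintype S] [DecidableEq S] {Mmat : CoxeterMatrix S}
  {W : Type*} [Group W] (cs : CoxeterSystem Mmat W)
  (ρ : W →* ((S → ℝ) ≃ₗ[ℝ] (S → ℝ)))

theorem root_neg_of_fsum_nonpos (hρ : GoodRep cs ρ) {z : S → ℝ} (hz : z ∈ rootSet ρ)
    (h : fsum z ≤ 0) : z ∈ negRoots ρ := by
  rcases root_pos_or_neg cs ρ hρ hz with h1 | h1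
  · exfalso
    have := fsum_pos_of_posRoot cs ρ hρ h1
    linarith
  · exact h1

theorem lemTR (hρ : GoodRep cs ρ) {x y : S → ℝ} (hx : x ∈ posRoots ρ) (hy : y ∈ posRoots ρ)
    (hc0 : 0 < bform Mmat x y) (hc1 : bform Mmat x y < 1) :
    ∃ w : W, ρ w y ∈ negRoots ρ ∧ ρ w x ∉ negRoots ρ := by
  classical
  have hxr : x ∈ rootSet ρ := ((mem_posRoots_iff cs ρ hρ x).1 hx).1
  have hyr : y ∈ rootSet ρ := ((mem_posRoots_iff cs ρ hρ y).1 hy).1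
  have hBxx : bform Mmat x x = 1 := bform_self_of_mem_rootSet cs ρ hρ hxr
  have hByy : bform Mmat y y = 1 := bform_self_of_mem_rootSet cs ρ hρ hyr
  set c : ℝ := bform Mmat x y with hc
  set ψ : ℝ := Real.arccos c with hψ
  have hψ0 : 0 < ψ := Real.arccos_pos.mpr hc1
  have hψ2 : ψ < Real.pi / 2 := Real.arccos_lt_pi_div_two.mpr hc0
  have hψπ : ψ < Real.pi := by linarith [Real.pi_pos]
  have hcψ : Real.cos ψ = c := Real.cos_arccos (by linarith) (by linarith)
  set sψ : ℝ := Real.sin ψ with hsψ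
  have hsψpos : 0 < sψ := Real.sin_pos_of_pos_of_lt_pi hψ0 hψπ
  have hsψne : sψ ≠ 0 := ne_of_gt hsψpos
  have hsψsq : sψ^2 = 1 - c^2 := by
    have h1 := Real.sin_sq_add_cos_sq ψ
    rw [hcψ] at h1
    linarith
  set e₂ : S → ℝ := sψ⁻¹ • (y - c • x) with he₂
  have hBxe : bform Mmat x e₂ = 0 := by
    rw [he₂, bform_smul_right, bform_sub_right, bform_smul_right, hBxx, ← hc]
    ring
  have hBex : bform Mmat e₂ x = 0 := by rw [bform_symm]; exact hBxe
  have hBye : bform Mmat y e₂ = sψ := by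
    rw [he₂, bform_smul_right, bform_sub_right, bform_smul_right, hByy, bform_symm y x, ← hc]
    field_simp
    nlinarith
  have hBey : bform Mmat e₂ y = sψ := by rw [bform_symm]; exact hBye
  have hBxe' : bform Mmat x (sψ⁻¹ • (y - c • x)) = 0 := by rw [← he₂]; exact hBxe
  have hBee : bform Mmat e₂ e₂ = 1 := by
    rw [he₂, bform_smul_left, bform_sub_left, bform_smul_left, hBye, hBxe']
    field_simp
    ring
  set v : ℝ → (S → ℝ) := fun θ => Real.cos θ • x + Real.sin θ • e₂ with hv
  have harg : ∀ a b : ℝ, a = b → v a = v b := fun a b h => by rw [h]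
  have hv0 : v 0 = x := by rw [hv]; simp
  have hvψ : v ψ = y := by
    rw [hv]
    show Real.cos ψ • x + Real.sin ψ • e₂ = y
    rw [hcψ, ← hsψ, he₂, smul_smul, mul_inv_cancel₀ hsψne, one_smul]
    module
  have hBv : ∀ θ θ', bform Mmat (v θ) (v θ') = Real.cos (θ - θ') := by
    intro θ θ'
    rw [hv]
    show bform Mmat (Real.cos θ • x + Real.sin θ • e₂) (Real.cos θ' • x + Real.sin θ' • e₂)
      = Real.cos (θ - θ')
    simp only [bform_add_left, bform_add_right, bform_smul_left, bform_smul_right,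
      hBxx, hBxe, hBex, hBee]
    rw [Real.cos_sub]
    ring
  have hrefl : ∀ (r : W) (θ₀ θ : ℝ), IsReflIn Mmat ρ r (v θ₀) →
      ρ r (v θ) = v (2*θ₀ + Real.pi - θ) := by
    intro r θ₀ θ hr
    have hA : Real.cos (2*θ₀ + Real.pi - θ)
        = Real.cos θ - 2*Real.cos (θ₀-θ)*Real.cos θ₀ := by
      rw [show 2*θ₀ + Real.pi - θ = Real.pi + (2*θ₀ - θ) by ring]
      simp only [Real.cos_add, Real.sin_add, Real.cos_sub, Real.sin_sub, Real.cos_pi,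
        Real.sin_pi, Real.cos_two_mul, Real.sin_two_mul]
      ring
    have hB : Real.sin (2*θ₀ + Real.pi - θ)
        = Real.sin θ - 2*Real.cos (θ₀-θ)*Real.sin θ₀ := by
      rw [show 2*θ₀ + Real.pi - θ = Real.pi + (2*θ₀ - θ) by ring]
      simp only [Real.sin_add, Real.cos_add, Real.cos_sub, Real.sin_sub, Real.cos_pi,
        Real.sin_pi, Real.cos_two_mul, Real.sin_two_mul]
      linear_combination (2*Real.sin θ) * (Real.sin_sq_add_cos_sq θ₀)
    have key : v (2*θ₀ + Real.pi - θ)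
        = (Real.cos θ - 2*Real.cos (θ₀-θ)*Real.cos θ₀) • x
          + (Real.sin θ - 2*Real.cos (θ₀-θ)*Real.sin θ₀) • e₂ := by
      rw [hv]
      show Real.cos (2*θ₀ + Real.pi - θ) • x + Real.sin (2*θ₀ + Real.pi - θ) • e₂ = _
      rw [hA, hB]
    rw [hr (v θ), hBv θ₀ θ, key]
    rw [hv]
    show (Real.cos θ • x + Real.sin θ • e₂) - (2 * Real.cos (θ₀ - θ)) •
        (Real.cos θ₀ • x + Real.sin θ₀ • e₂) = _
    module
  obtain ⟨rx, hrx⟩ := exists_reflIn cs ρ hρ hxr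
  obtain ⟨ry, hry⟩ := exists_reflIn cs ρ hρ hyr
  have hrx0 : IsReflIn Mmat ρ rx (v 0) := by rwa [hv0]
  have hryψ : IsReflIn Mmat ρ ry (v ψ) := by rwa [hvψ]
  set g : W := ry * rx with hg
  have hgact : ∀ θ, ρ g (v θ) = v (θ + 2*ψ) := by
    intro θ
    rw [hg, rho_mul_apply, hrefl rx 0 θ hrx0, hrefl ry ψ _ hryψ]
    apply harg
    ring
  have hgpow : ∀ (m : ℕ) (θ : ℝ), ρ (g^m) (v θ) = v (θ + 2*m*ψ) := by
    intro m
    induction m with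
    | zero =>
      intro θ
      rw [pow_zero, map_one]
      show v θ = _
      apply harg
      push_cast
      ring
    | succ m ihm =>
      intro θ
      rw [pow_succ, rho_mul_apply, hgact θ, ihm]
      apply harg
      push_cast
      ring
  -- the coordinate-sum wave
  set F₁ : ℝ := fsum x with hF₁
  set F₂ : ℝ := fsum e₂ with hF₂
  have hF1pos : 0 < F₁ := fsum_pos_of_posRoot cs ρ hρ hx
  set φ : ℝ := Real.arctan (F₂ / F₁) with hφ
  have hφ1 : 0 < Real.cos φ := by
    rw [hφ, Real.cos_arctan]
    positivity
  have hφlt : φ < Real.pi / 2 := Real.arctan_lt_pi_div_two _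
  have hφgt : -(Real.pi / 2) < φ := Real.neg_pi_div_two_lt_arctan _
  set R : ℝ := F₁ / Real.cos φ with hR
  have hRpos : 0 < R := div_pos hF1pos hφ1
  have hsinφ : Real.sin φ = (F₂ / F₁) * Real.cos φ := by
    have htan := Real.tan_arctan (F₂ / F₁)
    rw [← hφ] at htan
    rw [Real.tan_eq_sin_div_cos] at htan
    field_simp at htan ⊢
    linarith [htan]
  have hfv : ∀ θ, fsum (v θ) = R * Real.cos (θ - φ) := by
    intro θ
    rw [hv]
    show fsum (Real.cos θ • x + Real.sin θ • e₂) = _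
    rw [fsum_add, fsum_smul, fsum_smul, ← hF₁, ← hF₂, Real.cos_sub, hR, hsinφ]
    field_simp
  -- find the first sign change
  have hex : ∃ j : ℕ, Real.cos ((j:ℝ)*ψ - φ) ≤ 0 := by
    set j : ℕ := ⌈(Real.pi/2 + φ)/ψ⌉₊ with hj
    have harg0 : 0 ≤ (Real.pi/2 + φ)/ψ := by
      apply div_nonneg _ (le_of_lt hψ0)
      linarith
    refine ⟨j, Real.cos_nonpos_of_pi_div_two_le_of_le ?_ ?_⟩
    · have := Nat.le_ceil ((Real.pi/2 + φ)/ψ)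
      rw [← hj] at this
      rw [div_le_iff₀ hψ0] at this
      linarith
    · have := Nat.ceil_lt_add_one harg0
      rw [← hj] at this
      have h2 : (j:ℝ) * ψ < ((Real.pi/2 + φ)/ψ + 1) * ψ := by
        apply mul_lt_mul_of_pos_right this hψ0
      rw [add_mul, div_mul_cancel₀ _ (ne_of_gt hψ0)] at h2
      linarith
  set j₀ : ℕ := Nat.find hex with hj₀
  have hj₀spec : Real.cos ((j₀:ℝ)*ψ - φ) ≤ 0 := Nat.find_spec hex
  have hj₀ne : j₀ ≠ 0 := by
    intro h
    rw [h] at hj₀spec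
    simp only [Nat.cast_zero, zero_mul, zero_sub, Real.cos_neg] at hj₀spec
    linarith
  set js : ℕ := j₀ - 1 with hjs
  have hjslt : js < j₀ := by omega
  have hjsspec : 0 < Real.cos ((js:ℝ)*ψ - φ) := by
    have := Nat.find_min hex hjslt
    linarith [lt_of_not_ge this]
  have hj₀js : j₀ = js + 1 := by omega
  have hcospi : ∀ u : ℝ, Real.cos (Real.pi + u) = -Real.cos u := by
    intro u; simp [Real.cos_add]
  rcases Nat.even_or_odd js with hev | hod
  · obtain ⟨m, hm⟩ := hev
    refine ⟨g^m, ?_, ?_⟩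
    · have h1 : ρ (g^m) y = v ((j₀:ℝ)*ψ) := by
        rw [← hvψ, hgpow m ψ]
        apply harg
        rw [hj₀js, hm]
        push_cast
        ring
      apply root_neg_of_fsum_nonpos cs ρ hρ (rho_mem_rootSet ρ hyr _)
      rw [h1, hfv]
      exact mul_nonpos_of_nonneg_of_nonpos (le_of_lt hRpos) hj₀spec
    · intro hneg
      have h1 : ρ (g^m) x = v ((js:ℝ)*ψ) := by
        rw [← hv0, hgpow m 0]
        apply harg
        rw [hm]
        push_cast
        ring
      have h2 := fsum_neg_of_negRoot cs ρ hρ hneg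
      rw [h1, hfv] at h2
      nlinarith
  · have hj₀even : Even j₀ := by
      rw [hj₀js]
      rcases hod with ⟨k, hk⟩
      exact ⟨k+1, by omega⟩
    obtain ⟨m, hm⟩ := hj₀even
    refine ⟨g^m * rx, ?_, ?_⟩
    · have h1 : ρ (g^m * rx) y = v (Real.pi + (js:ℝ)*ψ) := by
        rw [← hvψ, rho_mul_apply, hrefl rx 0 ψ hrx0, hgpow m _]
        apply harg
        have : (j₀ : ℝ) = 2*m := by rw [hm]; push_cast; ring
        have hjsr : (js : ℝ) = (j₀:ℝ) - 1 := by
          rw [hj₀js]; push_cast; ring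
        rw [hjsr, this]
        ring
      apply root_neg_of_fsum_nonpos cs ρ hρ (rho_mem_rootSet ρ hyr _)
      rw [h1, hfv, show Real.pi + (js:ℝ)*ψ - φ = Real.pi + ((js:ℝ)*ψ - φ) by ring, hcospi]
      nlinarith
    · intro hneg
      have h1 : ρ (g^m * rx) x = v (Real.pi + (j₀:ℝ)*ψ) := by
        rw [← hv0, rho_mul_apply, hrefl rx 0 0 hrx0, hgpow m _]
        apply harg
        have : (j₀ : ℝ) = 2*m := by rw [hm]; push_cast; ring
        rw [this]
        ring
      have h2 := fsum_neg_of_negRoot cs ρ hρ hneg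
      rw [h1, hfv, show Real.pi + (j₀:ℝ)*ψ - φ = Real.pi + ((j₀:ℝ)*ψ - φ) by ring, hcospi] at h2
      nlinarith

end SRAux

namespace SRAux
set_option linter.unusedSectionVars false
set_option maxHeartbeats 2000000

open Real CoxeterSystem

variable {S : Type*} [Fintype S] [DecidableEq S] {Mmat : CoxeterMatrix S}
  {W : Type*} [Group W] (cs : CoxeterSystem Mmat W)
  (ρ : W →* ((S → ℝ) ≃ₗ[ℝ] (S → ℝ)))

theorem simpleRoot_coords_nonneg (s u : S) : (0:ℝ) ≤ simpleRoot s u := by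
  unfold simpleRoot
  rcases eq_or_ne u s with h | h
  · subst h; simp
  · simp [Pi.single_apply, h]

theorem simpleRoot_mem_posRoots (hρ : GoodRep cs ρ) (s : S) :
    simpleRoot s ∈ posRoots ρ :=
  (mem_posRoots_iff cs ρ hρ _).2 ⟨simpleRoot_mem_rootSet ρ s, simpleRoot_coords_nonneg s⟩

theorem rho_simple_invol (hρ : GoodRep cs ρ) (s : S) (v : S → ℝ) :
    ρ (cs.simple s) (ρ (cs.simple s) v) = v := by
  rw [← rho_mul_apply, cs.simple_mul_simple_self, map_one]
  rfl

theorem coord_rho_simple_ne (hρ : GoodRep cs ρ) (s : S) (v : S → ℝ) {u : S} (hu : u ≠ s) :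
    (ρ (cs.simple s) v) u = v u := by
  rw [hρ s v]
  have : simpleRoot (S := S) s u = 0 := by
    unfold simpleRoot
    simp [Pi.single_apply, hu]
  simp [this]

theorem simple_mul_descent_iff (hρ : GoodRep cs ρ) (w : W) (s : S) :
    cs.length (cs.simple s * w) + 1 = cs.length w ↔ ρ w⁻¹ (simpleRoot s) ∈ negRoots ρ := by
  have h1 : cs.length (cs.simple s * w) = cs.length (w⁻¹ * cs.simple s) := by
    rw [← cs.length_inv (w⁻¹ * cs.simple s)]
    congr 1
    rw [mul_inv_rev, cs.inv_simple, inv_inv]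
  have h2 : cs.length w = cs.length w⁻¹ := (cs.length_inv w).symm
  rw [h1, h2]
  exact descent_iff_negRoot cs ρ hρ w⁻¹ s

theorem dominates_smul (a b : S → ℝ) (vv : W) (h : Dominates ρ a b) :
    Dominates ρ (ρ vv a) (ρ vv b) := by
  intro w hw
  rw [← rho_mul_apply] at hw ⊢
  exact h (w * vv) hw

theorem bform_simpleRoot_rho_simple (hρ : GoodRep cs ρ) (s : S) (b : S → ℝ) :
    bform Mmat (simpleRoot s) (ρ (cs.simple s) b) = -(bform Mmat (simpleRoot s) b) := by
  rw [hρ s b, bform_sub_right, bform_smul_right, bform_simpleRoot_simpleRoot, kap_self]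
  ring

end SRAux

open SRAux in
/-- **Lemma 4.2.** (i) Every simple root is small.  (ii) For every positive root
`β ∈ Φ⁺ \ Δ` there is a simple root `α` with `B(α, β) > 0`, equivalently
`ℓ(s_α s_β s_α) = ℓ(s_β) − 2`; and for every such `α`, `β` is small if and only if
`s_α(β)` is small and `B(α, β) < 1`. -/
theorem simple_small_and_small_criterion {S : Type*} [Fintype S] [DecidableEq S]
    (Mmat : CoxeterMatrix S) {W : Type*} [Group W] (cs : CoxeterSystem Mmat W)
    (ρ : W →* ((S → ℝ) ≃ₗ[ℝ] (S → ℝ)))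
    (hfaith : Function.Injective ρ)
    (hρ : ∀ (s : S) (v : S → ℝ),
      ρ (cs.simple s) v = v - (2 * bform Mmat (simpleRoot s) v) • simpleRoot s) :
    (∀ s : S, IsSmallRoot ρ (simpleRoot s)) ∧
    (∀ b : S → ℝ, b ∈ posRoots ρ → b ∉ Set.range (simpleRoot (S := S)) →
      (∃ s : S, 0 < bform Mmat (simpleRoot s) b) ∧
      (∀ (s : S) (t : W), IsReflIn Mmat ρ t b →
        (0 < bform Mmat (simpleRoot s) b ↔
          cs.length (cs.simple s * t * cs.simple s) + 2 = cs.length t)) ∧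
      (∀ s : S, 0 < bform Mmat (simpleRoot s) b →
        (IsSmallRoot ρ b ↔
          (IsSmallRoot ρ (ρ (cs.simple s) b) ∧ bform Mmat (simpleRoot s) b < 1)))) := by
  have hρ' : GoodRep cs ρ := hρ
  constructor
  · -- Part (i): simple roots are small
    intro s
    refine ⟨simpleRoot_mem_posRoots cs ρ hρ' s, ?_⟩
    intro a ha hdom
    have h1 : ρ (cs.simple s) (simpleRoot s) ∈ negRoots ρ := by
      rw [rho_simple_simpleRoot_self cs ρ hρ']
      show -(-(simpleRoot (S := S) s)) ∈ posRoots ρ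
      rw [neg_neg]
      exact simpleRoot_mem_posRoots cs ρ hρ' s
    have h2 := hdom (cs.simple s) h1
    apply eq_simpleRoot_of_coords cs ρ hρ' ha s
    intro u hu
    have hle := ((mem_negRoots_iff cs ρ hρ' _).1 h2).2 u
    rw [coord_rho_simple_ne cs ρ hρ' s a hu] at hle
    have hge := ((mem_posRoots_iff cs ρ hρ' a).1 ha).2 u
    linarith
  · intro b hb hbns
    have hbr : b ∈ rootSet ρ := ((mem_posRoots_iff cs ρ hρ' b).1 hb).1
    have hbcoords := ((mem_posRoots_iff cs ρ hρ' b).1 hb).2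
    have hbneα : ∀ s : S, b ≠ simpleRoot s := fun s h => hbns ⟨s, h.symm⟩
    refine ⟨?_, ?_, ?_⟩
    · -- existence of s with B(α_s, b) > 0
      by_contra h
      push_neg at h
      have h1 : bform Mmat b b = 1 := bform_self_of_mem_rootSet cs ρ hρ' hbr
      rw [bform_eq_sum_coords] at h1
      have h2 : ∑ s : S, b s * bform Mmat (simpleRoot s) b ≤ 0 := by
        apply Finset.sum_nonpos
        intro s _
        exact mul_nonpos_of_nonneg_of_nonpos (hbcoords s) (h s)
      linarith
    · -- length criterion
      intro s t hrt
      obtain ⟨u₀, hu₀ne, hu₀pos⟩ := exists_other_pos_coord cs ρ hρ' hb s (hbneα s)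
      have hρtb : ρ t b = -b := reflIn_apply_self cs ρ hρ' hbr hrt
      have htt : t * t = 1 := reflIn_sq cs ρ hρ' hfaith hbr hrt
      have htinv : t⁻¹ = t := inv_eq_of_mul_eq_one_right htt
      have hbαs : bform Mmat b (simpleRoot s) = bform Mmat (simpleRoot s) b :=
        bform_symm b (simpleRoot s)
      have hρtαs : ρ t (simpleRoot s)
          = simpleRoot s - (2 * bform Mmat (simpleRoot s) b) • b := by
        rw [hrt (simpleRoot s), hbαs]
      constructor
      · intro hc
        -- Step 1: ρ t α_s is a negative root
        have hneg : ρ t (simpleRoot s) ∈ negRoots ρ := by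
          rcases root_pos_or_neg cs ρ hρ'
            (rho_mem_rootSet ρ (simpleRoot_mem_rootSet ρ s) t) with h1 | h1
          · exfalso
            have := ((mem_posRoots_iff cs ρ hρ' _).1 h1).2 u₀
            rw [hρtαs] at this
            have hαu : simpleRoot (S := S) s u₀ = 0 := by
              unfold simpleRoot; simp [Pi.single_apply, hu₀ne]
            simp only [Pi.sub_apply, Pi.smul_apply, smul_eq_mul, hαu] at this
            nlinarith
          · exact h1
        have hL1 : cs.length (cs.simple s * t) + 1 = cs.length t := by
          rw [simple_mul_descent_iff cs ρ hρ' t s, htinv]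
          exact hneg
        have h2 : ρ (cs.simple s * t) (simpleRoot s) ∈ negRoots ρ := by
          rcases root_pos_or_neg cs ρ hρ'
            (rho_mem_rootSet ρ (simpleRoot_mem_rootSet ρ s) _) with h1 | h1
          · exfalso
            have hcoord := ((mem_posRoots_iff cs ρ hρ' _).1 h1).2 u₀
            rw [rho_mul_apply, coord_rho_simple_ne cs ρ hρ' s _ hu₀ne, hρtαs] at hcoord
            have hαu : simpleRoot (S := S) s u₀ = 0 := by
              unfold simpleRoot; simp [Pi.single_apply, hu₀ne]
            simp only [Pi.sub_apply, Pi.smul_apply, smul_eq_mul, hαu] at hcoord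
            nlinarith
          · exact h1
        have hL2 : cs.length ((cs.simple s * t) * cs.simple s) + 1
            = cs.length (cs.simple s * t) :=
          (descent_iff_negRoot cs ρ hρ' (cs.simple s * t) s).2 h2
        have : cs.simple s * t * cs.simple s = (cs.simple s * t) * cs.simple s := by group
        rw [this]
        omega
      · intro hlen
        have hL1 : cs.length (cs.simple s * t) + 1 = cs.length t := by
          rcases cs.length_simple_mul t s with h1 | h1
          · exfalso
            rcases cs.length_mul_simple (cs.simple s * t) s with h2 | h2
            · have : cs.simple s * t * cs.simple s = (cs.simple s * t) * cs.simple s := by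
                group
              omega
            · have : cs.simple s * t * cs.simple s = (cs.simple s * t) * cs.simple s := by
                group
              omega
          · exact h1
        have hneg : ρ t (simpleRoot s) ∈ negRoots ρ := by
          rw [← htinv]
          exact (simple_mul_descent_iff cs ρ hρ' t s).1 hL1
        have hs := ((mem_negRoots_iff cs ρ hρ' _).1 hneg).2 s
        rw [hρtαs] at hs
        have hαs : simpleRoot (S := S) s s = 1 := by unfold simpleRoot; simp
        simp only [Pi.sub_apply, Pi.smul_apply, smul_eq_mul, hαs] at hs
        by_contra hcle
        push_neg at hcle
        have := hbcoords s
        nlinarith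
    · -- smallness criterion
      intro s hc
      set γ : S → ℝ := ρ (cs.simple s) b with hγ
      have hγpos : γ ∈ posRoots ρ := rho_simple_posRoot cs ρ hρ' hb s (hbneα s)
      have hγr : γ ∈ rootSet ρ := ((mem_posRoots_iff cs ρ hρ' γ).1 hγpos).1
      have hγb : ρ (cs.simple s) γ = b := rho_simple_invol cs ρ hρ' s b
      have hBαγ : bform Mmat (simpleRoot s) γ = -(bform Mmat (simpleRoot s) b) :=
        bform_simpleRoot_rho_simple cs ρ hρ' s b
      constructor
      · intro hsmall
        have hclt : bform Mmat (simpleRoot s) b < 1 := by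
          by_contra hge
          push_neg at hge
          have hdom : Dominates ρ (simpleRoot s) b := by
            intro w hw
            by_contra hnneg
            have hpos : ρ w (simpleRoot s) ∈ posRoots ρ :=
              posRoot_of_not_neg cs ρ hρ' (rho_mem_rootSet ρ (simpleRoot_mem_rootSet ρ s) w)
                hnneg
            apply lemK cs ρ hρ' (simpleRoot_mem_posRoots cs ρ hρ' s) hγpos
              (by rw [hBαγ]; linarith) (w * cs.simple s) ?_ ?_
            · rw [rho_mul_apply, rho_simple_simpleRoot_self cs ρ hρ', map_neg]
              show -(-(ρ w (simpleRoot s))) ∈ posRoots ρ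
              rwa [neg_neg]
            · rw [rho_mul_apply, hγb]
              exact hw
          have := hsmall.2 (simpleRoot s) (simpleRoot_mem_posRoots cs ρ hρ' s) hdom
          exact (hbneα s) this.symm
        refine ⟨⟨hγpos, ?_⟩, hclt⟩
        intro a ha hdom
        rcases eq_or_ne a (simpleRoot s) with rfl | hane
        · exfalso
          obtain ⟨rγ, hrγ⟩ := exists_reflIn cs ρ hρ' hγr
          have h1 : ρ rγ γ ∈ negRoots ρ := by
            rw [reflIn_apply_self cs ρ hρ' hγr hrγ]
            show -(-γ) ∈ posRoots ρ
            rwa [neg_neg]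
          have h2 := hdom rγ h1
          have h3 : ρ rγ (simpleRoot s) ∈ posRoots ρ := by
            apply posRoot_of_nonneg_coords cs ρ hρ'
              (rho_mem_rootSet ρ (simpleRoot_mem_rootSet ρ s) rγ)
            intro u
            rw [hrγ (simpleRoot s)]
            have hγαs : bform Mmat γ (simpleRoot s) = -(bform Mmat (simpleRoot s) b) := by
              rw [bform_symm]; exact hBαγ
            rw [hγαs]
            have h4 := ((mem_posRoots_iff cs ρ hρ' γ).1 hγpos).2 u
            have h5 := simpleRoot_coords_nonneg (S := S) s u
            simp only [Pi.sub_apply, Pi.smul_apply, smul_eq_mul]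
            nlinarith
          exact not_mem_pos_and_neg cs ρ hρ' _ h3 h2
        · have h3 : ρ (cs.simple s) a ∈ posRoots ρ := rho_simple_posRoot cs ρ hρ' ha s hane
          have h4 : Dominates ρ (ρ (cs.simple s) a) b := by
            have := dominates_smul ρ a γ (cs.simple s) hdom
            rwa [hγb] at this
          have h5 := hsmall.2 _ h3 h4
          have : ρ (cs.simple s) (ρ (cs.simple s) a) = ρ (cs.simple s) b := by rw [h5]
          rwa [rho_simple_invol cs ρ hρ' s a] at this
      · rintro ⟨hγsmall, hclt⟩
        refine ⟨hb, ?_⟩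
        intro a ha hdom
        rcases eq_or_ne a (simpleRoot s) with rfl | hane
        · exfalso
          obtain ⟨w, hw1, hw2⟩ := lemTR cs ρ hρ' (simpleRoot_mem_posRoots cs ρ hρ' s) hb hc hclt
          exact hw2 (hdom w hw1)
        · have h3 : ρ (cs.simple s) a ∈ posRoots ρ := rho_simple_posRoot cs ρ hρ' ha s hane
          have h4 : Dominates ρ (ρ (cs.simple s) a) γ := dominates_smul ρ a b (cs.simple s) hdom
          have h5 := hγsmall.2 _ h3 h4
          have : ρ (cs.simple s) (ρ (cs.simple s) a) = ρ (cs.simple s) γ := by rw [h5]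
          rwa [rho_simple_invol cs ρ hρ' s a, hγb] at this
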